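/- arXiv:1504.00640 — 2 statements merged into one kernel-verified Lean document; each statement's English description precedes it below -/
import Mathlib

section
/- The implicit function Λ is twice differentiable with Λ''(a) > 0 on (1-α, 1); consequently, the extension of Λ to [0,1] defined by Λ(a) = 0 for a ∈ [0, 1-α] and Λ(1) = 1 is a convex function from [0,1] to [0,1] with Λ(0) = 0 and Λ(1) = 1, which is strictly convex on [1-α, 1]. -/
/-- `F(λ,a) = λ log λ + (1-λ) log(1-λ) - λ log a - (1-λ) log(1-a)`, with `0 log 0 = 0`. -/
noncomputable def F (l a : ℝ) : ℝ :=
  l * Real.log l + (1 - l) * Real.log (1 - l) - l * Real.log a - (1 - l) * Real.log (1 - a)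

open Real Set Filter Topology

lemma F_zero {a : ℝ} : F 0 a = -Real.log (1 - a) := by simp [F]

lemma continuous_F_left (a : ℝ) : Continuous fun l => F l a := by
  unfold F
  have h1 : Continuous fun l : ℝ => l * Real.log l := Real.continuous_mul_log
  have h2 : Continuous fun l : ℝ => (1 - l) * Real.log (1 - l) :=
    Real.continuous_mul_log.comp (continuous_const.sub continuous_id)
  fun_prop

lemma hasDerivAt_F_left {a l : ℝ} (hl0 : 0 < l) (hl1 : l < 1) :
    HasDerivAt (fun l => F l a)
      (Real.log l - Real.log (1 - l) - Real.log a + Real.log (1 - a)) l := by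
  have h1 : HasDerivAt (fun l : ℝ => l * Real.log l) (Real.log l + 1) l :=
    Real.hasDerivAt_mul_log hl0.ne'
  have h2 : HasDerivAt (fun l : ℝ => (1 - l) * Real.log (1 - l))
      (-(Real.log (1 - l) + 1)) l := by
    have := (Real.hasDerivAt_mul_log (x := 1 - l) (by linarith)).comp l
      ((hasDerivAt_id l).const_sub 1)
    simpa [Function.comp_def] using this.neg.neg
  have h3 : HasDerivAt (fun l : ℝ => l * Real.log a) (Real.log a) l := by
    simpa using (hasDerivAt_id l).mul_const (Real.log a)
  have h4 : HasDerivAt (fun l : ℝ => (1 - l) * Real.log (1 - a)) (-Real.log (1 - a)) l := by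
    simpa using ((hasDerivAt_id l).const_sub 1).mul_const (Real.log (1 - a))
  have := ((h1.add h2).sub h3).sub h4
  exact this.congr_deriv (by ring)

lemma strictAntiOn_F {a : ℝ} (ha0 : 0 < a) (ha1 : a < 1) :
    StrictAntiOn (fun l => F l a) (Icc 0 a) := by
  apply strictAntiOn_of_deriv_neg (convex_Icc 0 a) ((continuous_F_left a).continuousOn)
  intro l hl
  rw [interior_Icc] at hl
  obtain ⟨hl0, hla⟩ := hl
  rw [(hasDerivAt_F_left hl0 (hla.trans ha1)).deriv]
  have h1 : Real.log (l * (1 - a)) < Real.log (a * (1 - l)) := by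
    apply Real.log_lt_log (by nlinarith)
    nlinarith
  rw [Real.log_mul hl0.ne' (by linarith), Real.log_mul ha0.ne' (by nlinarith)] at h1
  linarith

lemma lambda_mem {α : ℝ} (hα : α ∈ Ioo (0:ℝ) 1) {Λ : ℝ → ℝ}
    (hΛ1 : ∀ a ∈ Ioo (1-α) 1, Λ a ∈ Ico 0 a ∧ F (Λ a) a = -Real.log α)
    {a : ℝ} (ha : a ∈ Ioo (1-α) 1) : Λ a ∈ Ioo 0 a := by
  obtain ⟨⟨h0, hlt⟩, hF⟩ := hΛ1 a ha
  refine ⟨h0.lt_of_ne' fun h => ?_, hlt⟩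
  rw [h, F_zero] at hF
  have h1a : (0:ℝ) < 1 - a := by linarith [ha.2]
  have hlog : Real.log (1 - a) = Real.log α := by linarith
  have h2 : 1 - a = α := by
    rw [← Real.exp_log h1a, ← Real.exp_log hα.1, hlog]
  linarith [ha.1]

noncomputable def eLin (A B : ℝ) (hA : A ≠ 0) : (ℝ × ℝ) ≃ₗ[ℝ] (ℝ × ℝ) where
  toFun p := (A * p.1 + B * p.2, p.2)
  invFun q := ((q.1 - B * q.2) / A, q.2)
  map_add' p q := by refine Prod.ext ?_ rfl; simp; ring
  map_smul' c p := by refine Prod.ext ?_ rfl; simp [Prod.smul_fst, Prod.smul_snd]; ring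
  left_inv p := by
    have : (A * p.1 + B * p.2 - B * p.2) / A = p.1 := by field_simp; ring
    exact Prod.ext this rfl
  right_inv q := by
    have : A * ((q.1 - B * q.2) / A) + B * q.2 = q.1 := by field_simp; ring
    exact Prod.ext this rfl

lemma eLin_symm_apply (A B : ℝ) (hA : A ≠ 0) (q : ℝ × ℝ) :
    (eLin A B hA).symm q = ((q.1 - B * q.2) / A, q.2) := rfl

lemma key {α : ℝ} (hα : α ∈ Ioo (0:ℝ) 1) {Λ : ℝ → ℝ}
    (hΛ1 : ∀ a ∈ Ioo (1-α) 1, Λ a ∈ Ico 0 a ∧ F (Λ a) a = -Real.log α)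
    {a₀ : ℝ} (ha₀ : a₀ ∈ Ioo (1-α) 1) :
    HasDerivAt Λ ((a₀ - Λ a₀) /
      ((a₀ * (1 - a₀)) *
        (Real.log a₀ + Real.log (1 - Λ a₀) - Real.log (Λ a₀) - Real.log (1 - a₀)))) a₀ := by
  obtain ⟨hl0, hla⟩ := lambda_mem hα hΛ1 ha₀
  obtain ⟨_, hFeq⟩ := hΛ1 a₀ ha₀
  have ha1 : a₀ < 1 := ha₀.2
  have ha0 : 0 < a₀ := hl0.trans hla
  have hl1 : Λ a₀ < 1 := hla.trans ha1
  have h1l : (0:ℝ) < 1 - Λ a₀ := by linarith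
  have h1a : (0:ℝ) < 1 - a₀ := by linarith
  set l₀ := Λ a₀ with hl₀def
  set T := Real.log a₀ + Real.log (1 - l₀) - Real.log l₀ - Real.log (1 - a₀) with hTdef
  have hT : 0 < T := by
    have h1 : Real.log (l₀ * (1 - a₀)) < Real.log (a₀ * (1 - l₀)) := by
      apply Real.log_lt_log (by nlinarith)
      nlinarith
    rw [Real.log_mul hl0.ne' h1a.ne', Real.log_mul ha0.ne' h1l.ne'] at h1
    rw [hTdef]; linarith
  set A := Real.log l₀ - Real.log (1 - l₀) - Real.log a₀ + Real.log (1 - a₀) with hAdef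
  have hAT : A = -T := by rw [hAdef, hTdef]; ring
  have hA : A ≠ 0 := by rw [hAT]; exact neg_ne_zero.2 hT.ne'
  set B : ℝ := -(l₀ / a₀) + (1 - l₀) / (1 - a₀) with hBdef
  -- two-variable differentiability of (l,a) ↦ F l a at (l₀, a₀)
  have hF1 : ContDiffAt ℝ 1 (fun p : ℝ × ℝ => F p.1 p.2) (l₀, a₀) := by
    have c1 : ContDiffAt ℝ 1 (fun p : ℝ × ℝ => Real.log p.1) (l₀, a₀) :=
      ContDiffAt.comp (g := Real.log) (f := fun p : ℝ × ℝ => p.1) (l₀, a₀) (Real.contDiffAt_log.2 hl0.ne') contDiffAt_fst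
    have c2 : ContDiffAt ℝ 1 (fun p : ℝ × ℝ => Real.log (1 - p.1)) (l₀, a₀) :=
      ContDiffAt.comp (g := Real.log) (f := fun p : ℝ × ℝ => 1 - p.1) (l₀, a₀) (Real.contDiffAt_log.2 h1l.ne') (contDiffAt_const.sub contDiffAt_fst)
    have c3 : ContDiffAt ℝ 1 (fun p : ℝ × ℝ => Real.log p.2) (l₀, a₀) :=
      ContDiffAt.comp (g := Real.log) (f := fun p : ℝ × ℝ => p.2) (l₀, a₀) (Real.contDiffAt_log.2 ha0.ne') contDiffAt_snd
    have c4 : ContDiffAt ℝ 1 (fun p : ℝ × ℝ => Real.log (1 - p.2)) (l₀, a₀) :=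
      ContDiffAt.comp (g := Real.log) (f := fun p : ℝ × ℝ => 1 - p.2) (l₀, a₀) (Real.contDiffAt_log.2 h1a.ne') (contDiffAt_const.sub contDiffAt_snd)
    exact (((contDiffAt_fst.mul c1).add
      ((contDiffAt_const.sub contDiffAt_fst).mul c2)).sub
      (contDiffAt_fst.mul c3)).sub
      ((contDiffAt_const.sub contDiffAt_fst).mul c4)
  have hΦc : ContDiffAt ℝ 1 (fun p : ℝ × ℝ => ((F p.1 p.2, p.2) : ℝ × ℝ)) (l₀, a₀) :=
    hF1.prodMk contDiffAt_snd
  have hΦd : HasFDerivAt (fun p : ℝ × ℝ => ((F p.1 p.2, p.2) : ℝ × ℝ))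
      (((eLin A B hA).toContinuousLinearEquiv : (ℝ × ℝ) ≃L[ℝ] (ℝ × ℝ)) :
        (ℝ × ℝ) →L[ℝ] (ℝ × ℝ)) (l₀, a₀) := by
    have hone : HasFDerivAt (fun p : ℝ × ℝ => (1:ℝ) - p.1)
        (0 - ContinuousLinearMap.fst ℝ ℝ ℝ) (l₀, a₀) :=
      (hasFDerivAt_const 1 _).sub hasFDerivAt_fst
    have hone2 : HasFDerivAt (fun p : ℝ × ℝ => (1:ℝ) - p.2)
        (0 - ContinuousLinearMap.snd ℝ ℝ ℝ) (l₀, a₀) :=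
      (hasFDerivAt_const 1 _).sub hasFDerivAt_snd
    have hlog1 : HasFDerivAt (fun p : ℝ × ℝ => Real.log p.1)
        (l₀⁻¹ • ContinuousLinearMap.fst ℝ ℝ ℝ) (l₀, a₀) :=
      (Real.hasDerivAt_log hl0.ne').comp_hasFDerivAt (f := Prod.fst) ((l₀, a₀) : ℝ × ℝ) hasFDerivAt_fst
    have hlog2 : HasFDerivAt (fun p : ℝ × ℝ => Real.log (1 - p.1))
        ((1 - l₀)⁻¹ • (0 - ContinuousLinearMap.fst ℝ ℝ ℝ)) (l₀, a₀) :=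
      (Real.hasDerivAt_log h1l.ne').comp_hasFDerivAt (h₂ := Real.log) ((l₀, a₀) : ℝ × ℝ) hone
    have hlog3 : HasFDerivAt (fun p : ℝ × ℝ => Real.log p.2)
        (a₀⁻¹ • ContinuousLinearMap.snd ℝ ℝ ℝ) (l₀, a₀) :=
      (Real.hasDerivAt_log ha0.ne').comp_hasFDerivAt (f := Prod.snd) ((l₀, a₀) : ℝ × ℝ) hasFDerivAt_snd
    have hlog4 : HasFDerivAt (fun p : ℝ × ℝ => Real.log (1 - p.2))
        ((1 - a₀)⁻¹ • (0 - ContinuousLinearMap.snd ℝ ℝ ℝ)) (l₀, a₀) :=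
      (Real.hasDerivAt_log h1a.ne').comp_hasFDerivAt (h₂ := Real.log) ((l₀, a₀) : ℝ × ℝ) hone2
    have h1 := hasFDerivAt_fst.mul hlog1
    have h2 := hone.mul hlog2
    have h3 := hasFDerivAt_fst.mul hlog3
    have h4 := hone.mul hlog4
    have hbig := (((h1.add h2).sub h3).sub h4).prodMk hasFDerivAt_snd
    refine hbig.congr_fderiv ?_
    refine ContinuousLinearMap.ext fun p => ?_
    refine Prod.ext ?_ rfl
    simp only [ContinuousLinearEquiv.coe_coe, LinearEquiv.coe_toContinuousLinearEquiv',
      eLin, LinearEquiv.coe_mk, Equiv.coe_fn_mk, ContinuousLinearMap.prod_apply,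
      ContinuousLinearMap.add_apply, ContinuousLinearMap.coe_sub',
      ContinuousLinearMap.coe_smul', Pi.smul_apply, Pi.sub_apply, smul_eq_mul,
      ContinuousLinearMap.coe_fst', ContinuousLinearMap.coe_snd',
      ContinuousLinearMap.zero_apply, ContinuousLinearMap.sub_apply, LinearMap.coe_mk,
      AddHom.coe_mk]
    rw [hAdef, hBdef]
    field_simp
    ring
  have hstrict : HasStrictFDerivAt (fun p : ℝ × ℝ => ((F p.1 p.2, p.2) : ℝ × ℝ))
      (((eLin A B hA).toContinuousLinearEquiv : (ℝ × ℝ) ≃L[ℝ] (ℝ × ℝ)) :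
        (ℝ × ℝ) →L[ℝ] (ℝ × ℝ)) (l₀, a₀) :=
    hΦc.hasStrictFDerivAt' hΦd one_ne_zero
  set g : ℝ × ℝ → ℝ × ℝ :=
    hstrict.localInverse (fun p : ℝ × ℝ => ((F p.1 p.2, p.2) : ℝ × ℝ))
      (eLin A B hA).toContinuousLinearEquiv (l₀, a₀) with hgdef
  have hpt : ((F ((l₀, a₀) : ℝ × ℝ).1 ((l₀, a₀) : ℝ × ℝ).2, ((l₀, a₀) : ℝ × ℝ).2) : ℝ × ℝ)
      = (-Real.log α, a₀) := by simp [hFeq]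
  -- the local solution ψ
  set ψ : ℝ → ℝ := fun a => (g (-Real.log α, a)).1 with hψdef
  have htend : Tendsto (fun a : ℝ => ((-Real.log α, a) : ℝ × ℝ)) (𝓝 a₀)
      (𝓝 ((-Real.log α, a₀) : ℝ × ℝ)) := by
    exact (continuous_const.prodMk continuous_id).tendsto a₀
  have hψa₀ : ψ a₀ = l₀ := by
    have h := hstrict.localInverse_apply_image
    rw [← hgdef, hpt] at h
    rw [hψdef]
    simp only [h]
  have hψder : HasDerivAt ψ (((0:ℝ) - B * 1) / A) a₀ := by
    have hginv := hstrict.to_localInverse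
    rw [← hgdef] at hginv
    simp only at hginv
    rw [hpt] at hginv
    have hline : HasDerivAt (fun a : ℝ => ((-Real.log α, a) : ℝ × ℝ)) ((0:ℝ), (1:ℝ)) a₀ :=
      (hasDerivAt_const _ _).prodMk (hasDerivAt_id _)
    have h2 : HasDerivAt (fun a : ℝ => g (-Real.log α, a))
        ((((eLin A B hA).toContinuousLinearEquiv.symm : (ℝ × ℝ) →L[ℝ] (ℝ × ℝ))) ((0:ℝ), (1:ℝ)))
        a₀ := hginv.hasFDerivAt.comp_hasDerivAt a₀ hline
    have h3 := (ContinuousLinearMap.fst ℝ ℝ ℝ).hasFDerivAt.comp_hasDerivAt a₀ h2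
    have hval : ((((eLin A B hA).toContinuousLinearEquiv.symm :
        (ℝ × ℝ) →L[ℝ] (ℝ × ℝ))) ((0:ℝ), (1:ℝ))).1 = ((0:ℝ) - B * 1) / A := by
      simp only [ContinuousLinearEquiv.coe_coe, LinearEquiv.coe_toContinuousLinearEquiv_symm',
        eLin_symm_apply]
    rw [← hval]
    exact h3
  -- Λ agrees with ψ near a₀
  have hEq : Λ =ᶠ[𝓝 a₀] ψ := by
    have her := hstrict.eventually_right_inverse
    rw [← hgdef] at her
    simp only at her
    rw [hpt] at her
    have hri := htend.eventually her
    have hIoo : ∀ᶠ a in 𝓝 a₀, a ∈ Ioo (1 - α) 1 := isOpen_Ioo.eventually_mem ha₀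
    have hψc : ContinuousAt ψ a₀ := hψder.continuousAt
    have hg0 : ∀ᶠ a in 𝓝 a₀, 0 < ψ a := by
      have := hψc.tendsto
      rw [hψa₀] at this
      exact this.eventually (eventually_gt_nhds hl0)
    have hga : ∀ᶠ a in 𝓝 a₀, ψ a < a := by
      have hc2 : ContinuousAt (fun a => a - ψ a) a₀ := continuousAt_id.sub hψc
      have := hc2.tendsto
      rw [hψa₀] at this
      have h4 := this.eventually (eventually_gt_nhds (by linarith : (0:ℝ) < a₀ - l₀))
      filter_upwards [h4] with a ha'
      simpa using ha'
    filter_upwards [hri, hIoo, hg0, hga] with a hri' haI hψ0 hψa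
    have h2nd : (g (-Real.log α, a)).2 = a := congrArg Prod.snd hri'
    have hFψ : F (ψ a) a = -Real.log α := by
      have := congrArg Prod.fst hri'
      simp only at this
      rw [h2nd] at this
      exact this
    obtain ⟨hmem', hF'⟩ := hΛ1 a haI
    have ha0' : (0:ℝ) < a := lt_trans hψ0 hψa
    have ha1' : a < 1 := haI.2
    exact (strictAntiOn_F ha0' ha1').injOn ⟨hmem'.1, hmem'.2.le⟩ ⟨hψ0.le, hψa.le⟩
      (hF'.trans hFψ.symm)
  have hfinal : HasDerivAt Λ (((0:ℝ) - B * 1) / A) a₀ := hψder.congr_of_eventuallyEq hEq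
  convert hfinal using 1
  rw [hAT, hBdef]
  have hpa : a₀ * (1 - a₀) ≠ 0 := by positivity
  field_simp
  ring
set_option maxHeartbeats 1000000 in
lemma key2 {α : ℝ} (hα : α ∈ Ioo (0:ℝ) 1) {Λ : ℝ → ℝ}
    (hΛ1 : ∀ a ∈ Ioo (1-α) 1, Λ a ∈ Ico 0 a ∧ F (Λ a) a = -Real.log α)
    {a₀ : ℝ} (ha₀ : a₀ ∈ Ioo (1-α) 1) :
    DifferentiableAt ℝ (deriv Λ) a₀ ∧ 0 < deriv (deriv Λ) a₀ := by
  obtain ⟨hl0, hla⟩ := lambda_mem hα hΛ1 ha₀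
  have ha1 : a₀ < 1 := ha₀.2
  have ha0 : 0 < a₀ := hl0.trans hla
  have hl1 : Λ a₀ < 1 := hla.trans ha1
  have h1l : (0:ℝ) < 1 - Λ a₀ := by linarith
  have h1a : (0:ℝ) < 1 - a₀ := by linarith
  set φ : ℝ → ℝ := fun a => (a - Λ a) /
    ((a * (1 - a)) *
      (Real.log a + Real.log (1 - Λ a) - Real.log (Λ a) - Real.log (1 - a))) with hφdef
  have hEE : deriv Λ =ᶠ[𝓝 a₀] φ := by
    filter_upwards [isOpen_Ioo.eventually_mem ha₀] with a ha
    exact (key hα hΛ1 ha).deriv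
  set l₀ := Λ a₀ with hl₀def
  set t := Real.log a₀ + Real.log (1 - l₀) - Real.log l₀ - Real.log (1 - a₀) with htdef
  have ht : 0 < t := by
    have h1 : Real.log (l₀ * (1 - a₀)) < Real.log (a₀ * (1 - l₀)) := by
      apply Real.log_lt_log (by nlinarith)
      nlinarith
    rw [Real.log_mul hl0.ne' h1a.ne', Real.log_mul ha0.ne' h1l.ne'] at h1
    rw [htdef]; linarith
  set s := (a₀ - l₀) / ((a₀ * (1 - a₀)) * t) with hsdef
  have hs : HasDerivAt Λ s a₀ := key hα hΛ1 ha₀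
  have hvne : (a₀ * (1 - a₀)) * t ≠ 0 := by positivity
  -- derivative of φ at a₀
  have hu : HasDerivAt (fun a : ℝ => a - Λ a) (1 - s) a₀ := (hasDerivAt_id a₀).sub hs
  have hp : HasDerivAt (fun a : ℝ => a * (1 - a)) (1 * (1 - a₀) + a₀ * (0 - 1)) a₀ :=
    (hasDerivAt_id a₀).mul ((hasDerivAt_const a₀ 1).sub (hasDerivAt_id a₀))
  have hT : HasDerivAt (fun a : ℝ =>
      Real.log a + Real.log (1 - Λ a) - Real.log (Λ a) - Real.log (1 - a))
      (a₀⁻¹ + (0 - s) / (1 - l₀) - s / l₀ - (0 - 1) / (1 - a₀)) a₀ := by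
    have d1 : HasDerivAt (fun a : ℝ => Real.log a) a₀⁻¹ a₀ := Real.hasDerivAt_log ha0.ne'
    have d2 : HasDerivAt (fun a : ℝ => Real.log (1 - Λ a)) ((0 - s) / (1 - l₀)) a₀ :=
      HasDerivAt.log ((hasDerivAt_const a₀ 1).sub hs) h1l.ne'
    have d3 : HasDerivAt (fun a : ℝ => Real.log (Λ a)) (s / l₀) a₀ := hs.log hl0.ne'
    have d4 : HasDerivAt (fun a : ℝ => Real.log (1 - a)) ((0 - 1) / (1 - a₀)) a₀ :=
      HasDerivAt.log ((hasDerivAt_const a₀ 1).sub (hasDerivAt_id a₀)) h1a.ne'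
    exact ((d1.add d2).sub d3).sub d4
  have hv : HasDerivAt (fun a : ℝ => (a * (1 - a)) *
      (Real.log a + Real.log (1 - Λ a) - Real.log (Λ a) - Real.log (1 - a)))
      ((1 * (1 - a₀) + a₀ * (0 - 1)) * t +
        (a₀ * (1 - a₀)) * (a₀⁻¹ + (0 - s) / (1 - l₀) - s / l₀ - (0 - 1) / (1 - a₀))) a₀ :=
    hp.mul hT
  have hφ : HasDerivAt φ
      (((1 - s) * ((a₀ * (1 - a₀)) * t) - (a₀ - l₀) *
        ((1 * (1 - a₀) + a₀ * (0 - 1)) * t +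
          (a₀ * (1 - a₀)) * (a₀⁻¹ + (0 - s) / (1 - l₀) - s / l₀ - (0 - 1) / (1 - a₀)))) /
        ((a₀ * (1 - a₀)) * t) ^ 2) a₀ := hu.div hv hvne
  constructor
  · exact (hEE.differentiableAt_iff).2 hφ.differentiableAt
  · rw [hEE.deriv_eq, hφ.deriv]
    apply div_pos ?_ (by positivity)
    set q := l₀ * (1 - l₀) with hqdef
    have hq : 0 < q := by positivity
    set d := a₀ - l₀ with hddef
    have hd : 0 < d := by rw [hddef]; linarith
    have h1 : ((1 - s) * ((a₀ * (1 - a₀)) * t) - (a₀ - l₀) *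
        ((1 * (1 - a₀) + a₀ * (0 - 1)) * t +
          (a₀ * (1 - a₀)) * (a₀⁻¹ + (0 - s) / (1 - l₀) - s / l₀ - (0 - 1) / (1 - a₀)))) * (t * q)
        = t^2 * q * d^2 + (t * q - d)^2 := by
      rw [hsdef, hqdef, hddef]
      field_simp
      ring
    have hpos : 0 < t ^ 2 * q * d ^ 2 :=
      mul_pos (mul_pos (pow_pos ht 2) hq) (pow_pos hd 2)
    have htq : 0 < t * q := mul_pos ht hq
    have heq2 := (eq_div_iff htq.ne').2 h1
    rw [heq2]
    apply div_pos ?_ htq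
    have h2 := sq_nonneg (t * q - d)
    linarith

lemma cont_left {α : ℝ} (hα : α ∈ Ioo (0:ℝ) 1) {Λ : ℝ → ℝ}
    (hΛ0 : ∀ a ∈ Icc (0:ℝ) (1 - α), Λ a = 0)
    (hΛ1 : ∀ a ∈ Ioo (1-α) 1, Λ a ∈ Ico 0 a ∧ F (Λ a) a = -Real.log α) :
    ContinuousWithinAt Λ (Icc (1 - α) 1) (1 - α) := by
  have hc0 : (0:ℝ) < 1 - α := by linarith [hα.2]
  rw [Metric.continuousWithinAt_iff]
  intro ε hε
  set ε' := min (ε / 2) ((1 - α) / 2) with hε'def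
  have hε'0 : 0 < ε' := lt_min (by linarith) (by linarith)
  have hε'le : ε' < 1 - α := (min_le_right _ _).trans_lt (by linarith)
  have hFlt : F ε' (1 - α) < -Real.log α := by
    have h := strictAntiOn_F hc0 (by linarith [hα.1]) (Set.left_mem_Icc.2 hc0.le)
      ⟨hε'0.le, hε'le.le⟩ hε'0
    simp only [F_zero] at h
    have heq : (1:ℝ) - (1 - α) = α := by ring
    rw [heq] at h
    exact h
  have hcF : ContinuousAt (fun a => F ε' a) (1 - α) := by
    unfold F
    have h1 : ContinuousAt (fun a : ℝ => Real.log a) (1 - α) := Real.continuousAt_log hc0.ne'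
    have h2 : ContinuousAt (fun a : ℝ => Real.log (1 - a)) (1 - α) :=
      (Real.continuousAt_log (by simp; linarith [hα.1] : (1:ℝ) - (1 - α) ≠ 0)).comp
        (continuous_const.sub continuous_id).continuousAt
    fun_prop
  have hev := hcF.tendsto.eventually (eventually_lt_nhds hFlt)
  obtain ⟨δ, hδ0, hδ⟩ := Metric.eventually_nhds_iff.1 hev
  refine ⟨min δ (α / 2), lt_min hδ0 (by linarith [hα.1]), fun y hy hdist => ?_⟩
  have hy1 : 1 - α ≤ y := hy.1
  rcases eq_or_lt_of_le hy1 with rfl | hylt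
  · simpa using hε
  · have hdy : dist y (1 - α) < δ := hdist.trans_le (min_le_left _ _)
    have hy2 : y < 1 := by
      have := hdist.trans_le (min_le_right _ _)
      rw [Real.dist_eq, abs_of_pos (by linarith)] at this
      linarith [hα.1]
    obtain ⟨⟨hΛy0, hΛylt⟩, hFy⟩ := hΛ1 y ⟨hylt, hy2⟩
    have hΛyε : Λ y < ε' := by
      by_contra hle
      push_neg at hle
      have hFle : F (Λ y) y ≤ F ε' y := by
        have hanti := (strictAntiOn_F (by linarith : (0:ℝ) < y) hy2).antitoneOn
        exact hanti ⟨hε'0.le, by linarith⟩ ⟨hΛy0, hΛylt.le⟩ hle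
      have := hδ hdy
      rw [hFy] at hFle
      linarith
    rw [hΛ0 (1 - α) ⟨hc0.le, le_refl _⟩, Real.dist_eq]
    rw [abs_of_nonneg (by linarith)]
    have : ε' ≤ ε / 2 := min_le_left _ _
    linarith

lemma cont_right {α : ℝ} (hα : α ∈ Ioo (0:ℝ) 1) {Λ : ℝ → ℝ}
    (hΛ1 : ∀ a ∈ Ioo (1-α) 1, Λ a ∈ Ico 0 a ∧ F (Λ a) a = -Real.log α)
    (hΛ2 : Λ 1 = 1) :
    ContinuousWithinAt Λ (Icc (1 - α) 1) 1 := by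
  have hlogα : 0 < -Real.log α := by
    have := Real.log_neg hα.1 hα.2
    linarith
  rw [Metric.continuousWithinAt_iff]
  intro ε hε
  set M := (-Real.log α + 2) / ε with hMdef
  have hM : 0 < M := by positivity
  refine ⟨min (α / 2) (Real.exp (-M)), lt_min (by linarith [hα.1]) (Real.exp_pos _),
    fun y hy hdist => ?_⟩
  rcases eq_or_lt_of_le hy.2 with rfl | hy1
  · simpa using hε
  · have hda : dist y 1 < α / 2 := hdist.trans_le (min_le_left _ _)
    have hde : dist y 1 < Real.exp (-M) := hdist.trans_le (min_le_right _ _)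
    rw [Real.dist_eq, abs_of_neg (by linarith)] at hda hde
    have hyα : 1 - α < y := by linarith [hα.1]
    obtain ⟨⟨hΛy0, hΛylt⟩, hFy⟩ := hΛ1 y ⟨hyα, hy1⟩
    have hΛypos : 0 < Λ y := (lambda_mem hα hΛ1 ⟨hyα, hy1⟩).1
    have h1y : (0:ℝ) < 1 - y := by linarith
    have hΛy1 : Λ y < 1 := by linarith
    have h1Λ : (0:ℝ) < 1 - Λ y := by linarith
    -- lower bounds on entropy terms
    have hb1 : Λ y * Real.log (Λ y) ≥ Λ y - 1 := by
      have h := Real.log_le_sub_one_of_pos (inv_pos.2 hΛypos)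
      rw [Real.log_inv] at h
      have h' := mul_le_mul_of_nonneg_left h hΛy0
      rw [mul_sub, mul_inv_cancel₀ hΛypos.ne', mul_neg, mul_one] at h'
      linarith
    have hb2 : (1 - Λ y) * Real.log (1 - Λ y) ≥ -Λ y := by
      have h := Real.log_le_sub_one_of_pos (inv_pos.2 h1Λ)
      rw [Real.log_inv] at h
      have h' := mul_le_mul_of_nonneg_left h h1Λ.le
      rw [mul_sub, mul_inv_cancel₀ h1Λ.ne', mul_neg, mul_one] at h'
      linarith
    have hb3 : Λ y * Real.log y ≤ 0 :=
      mul_nonpos_of_nonneg_of_nonpos hΛy0 (Real.log_nonpos (by linarith) hy1.le)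
    have hde' : 1 - y < Real.exp (-M) := by linarith
    have hlog1y : Real.log (1 - y) < -M := by
      calc Real.log (1 - y) < Real.log (Real.exp (-M)) := Real.log_lt_log h1y hde'
        _ = -M := Real.log_exp _
    have hkey : (1 - Λ y) * (-Real.log (1 - y)) ≤ -Real.log α + 2 := by
      have := hFy
      unfold F at this
      nlinarith [hb1, hb2, hb3]
    have hfin : 1 - Λ y < ε := by
      have hMlt : M < -Real.log (1 - y) := by linarith
      by_contra hc
      push_neg at hc
      have h3 : ε * M = -Real.log α + 2 := by
        rw [hMdef, mul_div_cancel₀ _ hε.ne']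
      have h4 : ε * M < (1 - Λ y) * (-Real.log (1 - y)) := by
        calc ε * M < ε * (-Real.log (1 - y)) := by
              exact mul_lt_mul_of_pos_left hMlt hε
          _ ≤ (1 - Λ y) * (-Real.log (1 - y)) :=
              mul_le_mul_of_nonneg_right hc (by linarith)
      rw [h3] at h4
      linarith [hkey]
    rw [hΛ2, Real.dist_eq, abs_of_nonpos (by linarith)]
    linarith


/-- The implicit function `Λ` is twice differentiable with `Λ'' > 0` on `(1-α,1)`;
consequently its extension to `[0,1]` (with `Λ = 0` on `[0,1-α]` and `Λ(1) = 1`) is a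
convex function from `[0,1]` to `[0,1]` with `Λ(0) = 0`, `Λ(1) = 1`, which is strictly
convex on `[1-α,1]`. -/
theorem lambda_convex (α : ℝ) (hα : α ∈ Set.Ioo (0 : ℝ) 1)
    (Λ : ℝ → ℝ)
    (hΛ0 : ∀ a ∈ Set.Icc (0 : ℝ) (1 - α), Λ a = 0)
    (hΛ1 : ∀ a ∈ Set.Ioo (1 - α) 1, Λ a ∈ Set.Ico 0 a ∧ F (Λ a) a = -Real.log α)
    (hΛ2 : Λ 1 = 1) :
    (∀ a ∈ Set.Ioo (1 - α) 1,
      DifferentiableAt ℝ Λ a ∧ DifferentiableAt ℝ (deriv Λ) a ∧ 0 < deriv (deriv Λ) a) ∧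
    ConvexOn ℝ (Set.Icc (0 : ℝ) 1) Λ ∧
    (∀ a ∈ Set.Icc (0 : ℝ) 1, Λ a ∈ Set.Icc (0 : ℝ) 1) ∧
    Λ 0 = 0 ∧ Λ 1 = 1 ∧
    StrictConvexOn ℝ (Set.Icc (1 - α) 1) Λ := by
  have hc0 : (0:ℝ) ≤ 1 - α := by linarith [hα.2]
  have hc1 : 1 - α < 1 := by linarith [hα.1]
  have hnn : ∀ b ∈ Icc (0:ℝ) 1, 0 ≤ Λ b := by
    intro b hb
    rcases le_or_gt b (1 - α) with h | h
    · rw [hΛ0 b ⟨hb.1, h⟩]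
    · rcases eq_or_lt_of_le hb.2 with rfl | hb1
      · rw [hΛ2]; norm_num
      · exact (hΛ1 b ⟨h, hb1⟩).1.1
  have hle1 : ∀ b ∈ Icc (0:ℝ) 1, Λ b ≤ 1 := by
    intro b hb
    rcases le_or_gt b (1 - α) with h | h
    · rw [hΛ0 b ⟨hb.1, h⟩]; norm_num
    · rcases eq_or_lt_of_le hb.2 with rfl | hb1
      · rw [hΛ2]
      · exact le_of_lt ((hΛ1 b ⟨h, hb1⟩).1.2.trans_le hb.2)
  have hΛc : Λ (1 - α) = 0 := hΛ0 _ ⟨hc0, le_refl _⟩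
  have hcontOn : ContinuousOn Λ (Icc (1 - α) 1) := by
    intro x hx
    rcases eq_or_lt_of_le hx.1 with heq | hx1
    · rw [← heq]; exact cont_left hα hΛ0 hΛ1
    rcases eq_or_lt_of_le hx.2 with rfl | hx2
    · exact cont_right hα hΛ1 hΛ2
    · exact ((key hα hΛ1 ⟨hx1, hx2⟩).differentiableAt.continuousAt).continuousWithinAt
  have hStrict : StrictConvexOn ℝ (Icc (1 - α) 1) Λ := by
    apply strictConvexOn_of_deriv2_pos (convex_Icc _ _) hcontOn
    intro x hx
    rw [interior_Icc] at hx
    have h := (key2 hα hΛ1 hx).2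
    simpa using h
  have hconv1 := hStrict.convexOn
  have hconv : ConvexOn ℝ (Icc (0:ℝ) 1) Λ := by
    apply convexOn_of_slope_mono_adjacent (convex_Icc 0 1)
    intro x y z hx hz hxy hyz
    have hx0 := hx.1
    have hx1 := hx.2
    have hz0 := hz.1
    have hz1 := hz.2
    rcases le_or_gt z (1 - α) with hzc | hzc
    · rw [hΛ0 x ⟨hx.1, by linarith⟩, hΛ0 y ⟨by linarith, by linarith⟩, hΛ0 z ⟨hz.1, hzc⟩]
      simp
    rcases le_or_gt y (1 - α) with hyc | hyc
    · rw [hΛ0 x ⟨hx.1, by linarith⟩, hΛ0 y ⟨by linarith, hyc⟩]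
      simp only [sub_zero, zero_div]
      exact div_nonneg (hnn z hz) (by linarith)
    rcases le_or_gt x (1 - α) with hxc | hxc
    · rw [hΛ0 x ⟨hx.1, hxc⟩, sub_zero]
      have hslope := hconv1.slope_mono_adjacent (left_mem_Icc.2 (by linarith))
        ⟨hzc.le, hz.2⟩ hyc hyz
      rw [hΛc, sub_zero] at hslope
      refine le_trans ?_ hslope
      exact div_le_div_of_nonneg_left (hnn y ⟨by linarith, by linarith⟩)
        (by linarith) (by linarith)
    · exact hconv1.slope_mono_adjacent ⟨hxc.le, hx.2⟩ ⟨hzc.le, hz.2⟩ hxy hyz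
  refine ⟨fun a ha => ⟨(key hα hΛ1 ha).differentiableAt, (key2 hα hΛ1 ha).1,
      (key2 hα hΛ1 ha).2⟩, hconv, fun a ha => ⟨hnn a ha, hle1 a ha⟩,
    hΛ0 0 ⟨le_refl _, hc0⟩, hΛ2, hStrict⟩
end

section
/- Let Q be a probability measure with Q ≪ P and H(Q|P) ≤ -log α. Then for every A ∈ F one has Q(A) ≥ Λ(P(A)), where Λ: [0,1] → [0,1] is the convex function with Λ(a) = 0 for a ≤ 1-α and Λ(a) equal to the unique λ ∈ [0,a) with F(λ,a) = -log α for a ∈ (1-α,1), Λ(1)=1. Consequently { Q : H(Q|P) ≤ -log α } ⊆ { Q : Q(A) ≥ Λ(P(A)) for all A ∈ F }, and hence e_α(ξ) ≥ u_Λ(ξ) for every bounded random variable ξ, where u_Λ(ξ) = inf { E_Q[ξ] : Q(A) ≥ Λ(P(A)) for all A ∈ F }. -/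
open MeasureTheory

/-- The integrand `(dQ/dP) log (dQ/dP)` of the relative entropy `H(Q|P)`. -/
noncomputable def entIntegrand {Ω : Type*} [MeasurableSpace Ω] (Q P : Measure Ω) (ω : Ω) : ℝ :=
  (Q.rnDeriv P ω).toReal * Real.log (Q.rnDeriv P ω).toReal

/-- `H(Q|P) ≤ β`, where the relative entropy is understood to be `+∞` when the
integrand is not integrable. -/
def EntropyLE {Ω : Type*} [MeasurableSpace Ω] (Q P : Measure Ω) (β : ℝ) : Prop :=
  Integrable (entIntegrand Q P) P ∧ ∫ ω, entIntegrand Q P ω ∂P ≤ β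

lemma jensen_set {Ω : Type*} [MeasurableSpace Ω] (Q P : Measure Ω)
    [IsFiniteMeasure Q] [IsFiniteMeasure P] (hQP : Q ≪ P)
    (hInt : Integrable (entIntegrand Q P) P) {A : Set Ω} (_hA : MeasurableSet A)
    (h0 : P A ≠ 0) :
    (Q A).toReal * Real.log ((Q A).toReal / (P A).toReal)
      ≤ ∫ ω in A, entIntegrand Q P ω ∂P := by
  set μ := P.restrict A with hμ
  haveI : NeZero μ := ⟨by simpa [hμ, Measure.restrict_eq_zero] using h0⟩
  have hfi : Integrable (fun ω => (Q.rnDeriv P ω).toReal) μ :=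
    Measure.integrable_toReal_rnDeriv.restrict
  have hgi : Integrable ((fun x => x * Real.log x) ∘ fun ω => (Q.rnDeriv P ω).toReal) μ :=
    hInt.restrict
  have hJ := Real.convexOn_mul_log.map_average_le Real.continuous_mul_log.continuousOn
    isClosed_Ici (f := fun ω => (Q.rnDeriv P ω).toReal) (μ := μ)
    (Filter.Eventually.of_forall fun x => ENNReal.toReal_nonneg) hfi hgi
  have havg : ⨍ ω, (Q.rnDeriv P ω).toReal ∂μ = (Q A).toReal / (P A).toReal := by
    rw [average_eq, hμ]
    simp only [measureReal_restrict_apply_univ]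
    rw [Measure.setIntegral_toReal_rnDeriv hQP A]
    rw [smul_eq_mul, div_eq_inv_mul, measureReal_def, measureReal_def]
  have havg2 : ⨍ ω, (Q.rnDeriv P ω).toReal * Real.log (Q.rnDeriv P ω).toReal ∂μ
      = (P A).toReal⁻¹ * ∫ ω in A, entIntegrand Q P ω ∂P := by
    rw [average_eq, hμ]
    simp only [measureReal_restrict_apply_univ, smul_eq_mul]
    rfl
  rw [havg, havg2] at hJ
  have hc : 0 < (P A).toReal :=
    ENNReal.toReal_pos h0 (measure_ne_top _ _)
  have := mul_le_mul_of_nonneg_left hJ hc.le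
  calc (Q A).toReal * Real.log ((Q A).toReal / (P A).toReal)
      = (P A).toReal * ((Q A).toReal / (P A).toReal *
          Real.log ((Q A).toReal / (P A).toReal)) := by
        field_simp
    _ ≤ (P A).toReal * ((P A).toReal⁻¹ * ∫ ω in A, entIntegrand Q P ω ∂P) := this
    _ = ∫ ω in A, entIntegrand Q P ω ∂P := by field_simp

lemma F_strictAntiOn {a : ℝ} (ha : a ∈ Set.Ioo (0:ℝ) 1) :
    StrictAntiOn (fun l => F l a) (Set.Icc 0 a) := by
  apply strictAntiOn_of_deriv_neg (convex_Icc 0 a)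
  · apply Continuous.continuousOn
    have h1 : Continuous fun l : ℝ => l * Real.log l := Real.continuous_mul_log
    have h2 : Continuous fun l : ℝ => (1 - l) * Real.log (1 - l) :=
      Real.continuous_mul_log.comp (continuous_const.sub continuous_id)
    unfold F
    continuity
  · intro x hx
    rw [interior_Icc] at hx
    have hx0 : 0 < x := hx.1
    have hxa : x < a := hx.2
    have hx1 : x < 1 := hxa.trans ha.2
    have hd : HasDerivAt (fun l => F l a)
        ((Real.log x + 1) + (Real.log (1 - x) + 1) * (-1) - Real.log a - (-1) * Real.log (1 - a)) x := by
      have d1 : HasDerivAt (fun l : ℝ => l * Real.log l) (Real.log x + 1) x :=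
        Real.hasDerivAt_mul_log hx0.ne'
      have dsub : HasDerivAt (fun l : ℝ => 1 - l) (-1) x := by
        simpa using (hasDerivAt_id x).const_sub 1
      have d2 : HasDerivAt (fun l : ℝ => (1 - l) * Real.log (1 - l))
          ((Real.log (1 - x) + 1) * (-1)) x :=
        (Real.hasDerivAt_mul_log (by linarith : (1:ℝ) - x ≠ 0)).comp x dsub
      have d3 : HasDerivAt (fun l : ℝ => l * Real.log a) (Real.log a) x := by
        simpa using (hasDerivAt_id x).mul_const (Real.log a)
      have d4 : HasDerivAt (fun l : ℝ => (1 - l) * Real.log (1 - a))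
          ((-1) * Real.log (1 - a)) x := by
        simpa using dsub.mul_const (Real.log (1 - a))
      exact ((d1.add d2).sub d3).sub d4
    rw [hd.deriv]
    have l1 : Real.log x < Real.log a := Real.log_lt_log hx0 hxa
    have l2 : Real.log (1 - a) < Real.log (1 - x) :=
      Real.log_lt_log (by linarith [ha.2]) (by linarith)
    ring_nf
    nlinarith [l1, l2]


lemma F_split {a l : ℝ} (ha : a ∈ Set.Ioo (0:ℝ) 1) (hl0 : 0 ≤ l) (hl1 : l ≤ 1) :
    l * Real.log (l / a) + (1 - l) * Real.log ((1 - l) / (1 - a)) = F l a := by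
  have ha0 : a ≠ 0 := ha.1.ne'
  have ha1 : (1:ℝ) - a ≠ 0 := by have := ha.2; intro h; linarith [h]
  unfold F
  rcases eq_or_lt_of_le hl0 with h0 | h0
  · simp [← h0, Real.log_div one_ne_zero ha1]
  rcases eq_or_lt_of_le hl1 with h1 | h1
  · subst h1
    simp [Real.log_div one_ne_zero ha0]
  rw [Real.log_div h0.ne' ha0, Real.log_div (by linarith : (1:ℝ) - l ≠ 0) ha1]
  ring

/-- If `Q ≪ P` with `H(Q|P) ≤ -log α`, then `Q(A) ≥ Λ(P(A))` for every `A ∈ F`, where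
`Λ` is the convex distortion vanishing on `[0,1-α]`, with `Λ(a)` the unique `λ ∈ [0,a)`
solving `F(λ,a) = -log α` for `a ∈ (1-α,1)` and `Λ(1) = 1`.  Consequently the entropy
scenario set is contained in the scenario set of the commonotone utility `u_Λ`, and hence
`e_α(ξ) ≥ u_Λ(ξ)` for every bounded random variable `ξ`. -/
theorem evar_ge_commonotone
    {Ω : Type*} [MeasurableSpace Ω] (P : Measure Ω) [IsProbabilityMeasure P] [NullSingletonClass P]
    (α : ℝ) (hα : α ∈ Set.Ioo (0 : ℝ) 1)
    (Λ : ℝ → ℝ)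
    (hΛ0 : ∀ a ∈ Set.Icc (0 : ℝ) (1 - α), Λ a = 0)
    (hΛ1 : ∀ a ∈ Set.Ioo (1 - α) 1, Λ a ∈ Set.Ico 0 a ∧ F (Λ a) a = -Real.log α)
    (hΛ2 : Λ 1 = 1) :
    (∀ Q : Measure Ω, IsProbabilityMeasure Q → Q ≪ P → EntropyLE Q P (-Real.log α) →
      ∀ A : Set Ω, MeasurableSet A → Λ ((P A).toReal) ≤ (Q A).toReal) ∧
    {Q : Measure Ω | IsProbabilityMeasure Q ∧ Q ≪ P ∧ EntropyLE Q P (-Real.log α)}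
      ⊆ {Q : Measure Ω | IsProbabilityMeasure Q ∧ Q ≪ P ∧
          ∀ A : Set Ω, MeasurableSet A → Λ ((P A).toReal) ≤ (Q A).toReal} ∧
    (∀ ξ : Ω → ℝ, Measurable ξ → (∃ C : ℝ, ∀ᵐ ω ∂P, |ξ ω| ≤ C) →
      sInf {y : ℝ | ∃ Q : Measure Ω, IsProbabilityMeasure Q ∧ Q ≪ P ∧
          (∀ A : Set Ω, MeasurableSet A → Λ ((P A).toReal) ≤ (Q A).toReal) ∧
          y = ∫ ω, ξ ω ∂Q}
        ≤ sInf {y : ℝ | ∃ Q : Measure Ω, IsProbabilityMeasure Q ∧ Q ≪ P ∧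
          EntropyLE Q P (-Real.log α) ∧ y = ∫ ω, ξ ω ∂Q}) := by
  have part1 : ∀ Q : Measure Ω, IsProbabilityMeasure Q → Q ≪ P →
      EntropyLE Q P (-Real.log α) →
      ∀ A : Set Ω, MeasurableSet A → Λ ((P A).toReal) ≤ (Q A).toReal := by
    intro Q hQprob hQP hEnt A hA
    set a := (P A).toReal with ha_def
    set l := (Q A).toReal with hl_def
    have ha0 : 0 ≤ a := ENNReal.toReal_nonneg
    have hl0 : 0 ≤ l := ENNReal.toReal_nonneg
    have ha1 : a ≤ 1 := by
      rw [ha_def]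
      exact ENNReal.toReal_le_of_le_ofReal one_pos.le (by simpa using prob_le_one)
    have hl1 : l ≤ 1 := by
      rw [hl_def]
      exact ENNReal.toReal_le_of_le_ofReal one_pos.le (by simpa using prob_le_one)
    by_cases hsmall : a ≤ 1 - α
    · rw [hΛ0 a ⟨ha0, hsmall⟩]; exact hl0
    push_neg at hsmall
    rcases eq_or_lt_of_le ha1 with haeq | halt
    · -- a = 1
      rw [haeq, hΛ2]
      have hPA : P A = 1 := (ENNReal.toReal_eq_one_iff _).mp haeq
      have hPAc : P Aᶜ = 0 := (prob_compl_eq_zero_iff hA).mpr hPA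
      have hQAc : Q Aᶜ = 0 := hQP hPAc
      have hQA : Q A = 1 := (prob_compl_eq_zero_iff hA).mp hQAc
      simp [hl_def, hQA]
    · -- a ∈ (1-α, 1)
      have haIoo : a ∈ Set.Ioo (1 - α) 1 := ⟨hsmall, halt⟩
      obtain ⟨hΛrange, hΛeq⟩ := hΛ1 a haIoo
      have ha01 : a ∈ Set.Ioo (0:ℝ) 1 := ⟨lt_of_le_of_lt (by linarith [hα.2]) hsmall, halt⟩
      -- key: F l a ≤ - log α
      have hPA0 : P A ≠ 0 := by
        intro h; rw [ha_def, h] at ha01; simp at ha01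
      have hPAc0 : P Aᶜ ≠ 0 := by
        intro h
        have h1 : P A = 1 := (prob_compl_eq_zero_iff hA).mp h
        have : a = 1 := by rw [ha_def, h1]; simp
        exact absurd this halt.ne
      have hQAc : (Q Aᶜ).toReal = 1 - l := by
        have := measure_compl hA (measure_ne_top Q A)
        rw [measure_univ] at this
        rw [this, ENNReal.toReal_sub_of_le prob_le_one (by simp)]
        simp [hl_def]
      have hPAc : (P Aᶜ).toReal = 1 - a := by
        have := measure_compl hA (measure_ne_top P A)
        rw [measure_univ] at this
        rw [this, ENNReal.toReal_sub_of_le prob_le_one (by simp)]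
        simp [ha_def]
      obtain ⟨hInt, hle⟩ := hEnt
      have hsplit : ∫ ω, entIntegrand Q P ω ∂P
          = (∫ ω in A, entIntegrand Q P ω ∂P) + ∫ ω in Aᶜ, entIntegrand Q P ω ∂P :=
        (integral_add_compl hA hInt).symm
      have hJ1 := jensen_set Q P hQP hInt hA hPA0
      have hJ2 := jensen_set Q P hQP hInt hA.compl hPAc0
      rw [hQAc, hPAc] at hJ2
      have hkey : F l a ≤ -Real.log α := by
        calc F l a = l * Real.log (l / a) + (1 - l) * Real.log ((1 - l) / (1 - a)) :=
              (F_split ha01 hl0 hl1).symm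
          _ ≤ ∫ ω, entIntegrand Q P ω ∂P := by rw [hsplit]; exact add_le_add hJ1 hJ2
          _ ≤ -Real.log α := hle
      by_contra hlt
      push_neg at hlt
      have hlmem : l ∈ Set.Icc (0:ℝ) a := ⟨hl0, (hlt.trans hΛrange.2).le⟩
      have hΛmem : Λ a ∈ Set.Icc (0:ℝ) a := ⟨hΛrange.1, hΛrange.2.le⟩
      have : F (Λ a) a < F l a := F_strictAntiOn ha01 hlmem hΛmem hlt
      rw [hΛeq] at this
      exact absurd (hkey.trans_lt this) (lt_irrefl _)
  refine ⟨part1, ?_, ?_⟩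
  · rintro Q ⟨h1, h2, h3⟩
    exact ⟨h1, h2, part1 Q h1 h2 h3⟩
  · rintro ξ hξ ⟨C, hC⟩
    apply csInf_le_csInf
    · refine ⟨-C, ?_⟩
      rintro y ⟨Q, hQprob, hQP, -, rfl⟩
      have hCQ : ∀ᵐ ω ∂Q, |ξ ω| ≤ C := hQP.ae_le hC
      have hint : Integrable ξ Q := by
        refine Integrable.mono' (integrable_const C) hξ.aestronglyMeasurable ?_
        simpa [Real.norm_eq_abs] using hCQ
      have : ∫ ω, (fun _ => -C) ω ∂Q ≤ ∫ ω, ξ ω ∂Q := by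
        refine integral_mono_ae (integrable_const _) hint ?_
        filter_upwards [hCQ] with ω h using (abs_le.mp h).1
      simpa using this
    · refine ⟨∫ ω, ξ ω ∂P, P, inferInstance, Measure.AbsolutelyContinuous.rfl, ?_, rfl⟩
      have h0 : entIntegrand P P =ᵐ[P] (fun _ => (0:ℝ)) := by
        filter_upwards [Measure.rnDeriv_self P] with ω h
        simp [entIntegrand, h]
      constructor
      · exact (integrable_const (0:ℝ)).congr h0.symm
      · rw [integral_congr_ae h0]
        simp
        linarith [Real.log_neg hα.1 hα.2]
    · rintro y ⟨Q, h1, h2, h3, rfl⟩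
      exact ⟨Q, h1, h2, part1 Q h1 h2 h3, rfl⟩
end
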